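/- Let H be a simple graph. For every ε > 0 there exists N such that every H-free graph G on n ≥ N vertices has a spanning subgraph G′ with e(G) − e(G′) ≤ ε·n² such that there is no graph homomorphism from H to G′. -/

import Mathlib

open SimpleGraph

/-- `H` has a copy in `G`: an injective graph homomorphism from `H` to `G`,
i.e. `G` contains a subgraph isomorphic to `H`. -/
def Copies {α β : Type*} (H : SimpleGraph α) (G : SimpleGraph β) : Prop :=
  ∃ f : H →g G, Function.Injective f

open Finset Function

set_option linter.unusedSectionVars false
set_option linter.unusedVariables false
set_option maxHeartbeats 1000000

namespace RemovalAux

set_option linter.unusedSectionVars false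
set_option maxHeartbeats 1000000

variable {β : Type*} [Fintype β] [DecidableEq β] {G : SimpleGraph β} [DecidableRel G.Adj]

lemma bad_card {u' δ : ℝ} {X Y Y' : Finset β} (hu : 0 < u')
    (hδu : u' ≤ δ / 2) (hδ : 0 < δ)
    (hXY : G.IsUniform u' X Y) (hd : δ ≤ (G.edgeDensity X Y : ℝ))
    (hY's : Y' ⊆ Y) (hY'c : (#Y : ℝ) * u' ≤ (#Y' : ℝ)) :
    (#(X.filter fun x => ((#(Y'.filter (G.Adj x)) : ℝ) < (δ - u') * #Y')) : ℝ) < u' * #X := by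
  by_contra hcon
  push_neg at hcon
  set B := X.filter fun x => ((#(Y'.filter (G.Adj x)) : ℝ) < (δ - u') * #Y') with hBdef
  have hBX : B ⊆ X := filter_subset _ _
  have hBc : (#X : ℝ) * u' ≤ #B := by rwa [mul_comm]
  have hunif := hXY hBX hY's hBc hY'c
  have hIB : (#(G.interedges B Y') : ℝ) ≤ #B * ((δ - u') * #Y') := by
    have heq : G.interedges B Y' = Rel.interedges G.Adj B Y' := rfl
    rw [heq]
    refine (Nat.cast_le.2 <| (card_le_card (subset_of_eq (Rel.interedges_eq_biUnion _))).trans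
      card_biUnion_le).trans ?_
    rw [Nat.cast_sum]
    simp_rw [card_map]
    refine (sum_le_card_nsmul _ _ ((δ - u') * #Y') fun x hx => ?_).trans_eq (nsmul_eq_mul _ _)
    exact (mem_filter.1 hx).2.le
  have hdB : (G.edgeDensity B Y' : ℝ) ≤ δ - u' := by
    have h0 : (G.edgeDensity B Y' : ℝ) = #(G.interedges B Y') / (#B * #Y') := by
      rw [SimpleGraph.edgeDensity_def]; push_cast; ring
    rw [h0]
    refine div_le_of_le_mul₀ (by positivity) (by linarith) ?_
    calc (#(G.interedges B Y') : ℝ) ≤ #B * ((δ - u') * #Y') := hIB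
      _ = (δ - u') * (#B * #Y') := by ring
  rw [abs_sub_lt_iff] at hunif
  linarith [hunif.2]


section EmbedSec
variable {α : Type*}




open Classical in
/-- Candidate set for vertex `a` of `H` after the first `i` vertices (in the order given by `e`)
have been embedded by `g`. -/
noncomputable def cand (G : SimpleGraph β) (H : SimpleGraph α) {t : ℕ} (e : α ≃ Fin t)
    (part : α → Finset β) (g : Fin t → β) (i : ℕ) (a : α) : Finset β :=
  (part a).filter fun y => ∀ k : Fin t, (k : ℕ) < i → H.Adj a (e.symm k) → G.Adj y (g k)

lemma mem_cand {G : SimpleGraph β} {H : SimpleGraph α} {t : ℕ} {e : α ≃ Fin t}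
    {part : α → Finset β} {g : Fin t → β} {i : ℕ} {a : α} {y : β} :
    y ∈ cand G H e part g i a ↔
      y ∈ part a ∧ ∀ k : Fin t, (k : ℕ) < i → H.Adj a (e.symm k) → G.Adj y (g k) := by
  classical
  simp [cand]

lemma cand_subset {G : SimpleGraph β} {H : SimpleGraph α} {t : ℕ} {e : α ≃ Fin t}
    {part : α → Finset β} {g : Fin t → β} {i : ℕ} {a : α} :
    cand G H e part g i a ⊆ part a := fun _ hy => (mem_cand.1 hy).1

lemma cand_zero {G : SimpleGraph β} {H : SimpleGraph α} {t : ℕ} {e : α ≃ Fin t}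
    {part : α → Finset β} {g : Fin t → β} {a : α} :
    cand G H e part g 0 a = part a := by
  ext y; simp [mem_cand]

open Classical in
lemma cand_succ {G : SimpleGraph β} [DecidableRel G.Adj] {H : SimpleGraph α} {t : ℕ} {e : α ≃ Fin t}
    {part : α → Finset β} (g : Fin t → β) {i : ℕ} (hi : i < t) (x : β) (a : α) :
    cand G H e part (Function.update g ⟨i, hi⟩ x) (i + 1) a
      = (cand G H e part g i a).filter (fun y => H.Adj a (e.symm ⟨i, hi⟩) → G.Adj y x) := by
  classical
  ext y
  simp only [mem_cand, mem_filter]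
  constructor
  · rintro ⟨hy, h⟩
    refine ⟨⟨hy, fun k hk hadj => ?_⟩, fun hadj => ?_⟩
    · have hne : k ≠ ⟨i, hi⟩ := by rintro rfl; exact absurd hk (lt_irrefl _)
      have := h k (Nat.lt_succ_of_lt hk) hadj
      rwa [Function.update_of_ne hne] at this
    · have := h ⟨i, hi⟩ (Nat.lt_succ_self i) hadj
      rwa [Function.update_self] at this
  · rintro ⟨⟨hy, h⟩, hx⟩
    refine ⟨hy, fun k hk hadj => ?_⟩
    rcases Nat.lt_succ_iff_lt_or_eq.1 hk with hk' | hk'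
    · have hne : k ≠ ⟨i, hi⟩ := by rintro rfl; exact absurd hk' (lt_irrefl _)
      rw [Function.update_of_ne hne]
      exact h k hk' hadj
    · have hkk : k = ⟨i, hi⟩ := Fin.ext hk'
      subst hkk
      rw [Function.update_self]
      exact hx hadj


lemma embed [Nonempty β] [Fintype α] (H : SimpleGraph α) (G : SimpleGraph β)
    [DecidableRel G.Adj] (part : α → Finset β) (δ u' m M : ℝ)
    (hδ : 0 < δ) (hδ1 : δ ≤ 1) (hu : 0 < u') (huδ : u' ≤ δ / 2)
    (hm : ∀ a, m ≤ #(part a)) (hM : ∀ a, (#(part a) : ℝ) ≤ M)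
    (hunif : ∀ a b, H.Adj a b → G.IsUniform u' (part a) (part b))
    (hdens : ∀ a b, H.Adj a b → δ ≤ (G.edgeDensity (part a) (part b) : ℝ))
    (hbig : (Fintype.card α : ℝ) * (u' * M) + (Fintype.card α) + 1
      ≤ (δ / 2) ^ (Fintype.card α) * m)
    (hm' : u' * M ≤ (δ / 2) ^ (Fintype.card α) * m) :
    ∃ g : α → β, Function.Injective g ∧ ∀ a b, H.Adj a b → G.Adj (g a) (g b) := by
  classical
  rcases isEmpty_or_nonempty α with hα | hα
  · exact ⟨fun a => isEmptyElim a, fun a => isEmptyElim a, fun a => isEmptyElim a⟩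
  set t := Fintype.card α with ht
  set e : α ≃ Fin t := Fintype.equivFin α with he
  have hhalf : (0:ℝ) < δ / 2 := by linarith
  have hhalf1 : δ / 2 ≤ 1 := by linarith
  have hMnn : (0:ℝ) ≤ M := le_trans (Nat.cast_nonneg _) (hM (Classical.arbitrary α))
  have htnn : (0:ℝ) ≤ (t:ℝ) := Nat.cast_nonneg _
  have hpt : (0:ℝ) < (δ/2)^t := pow_pos hhalf t
  have huM : (0:ℝ) ≤ u' * M := mul_nonneg hu.le hMnn
  have hpm1 : (1:ℝ) ≤ (δ/2)^t * m := by nlinarith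
  have hm0 : (0:ℝ) < m := by
    by_contra hcc
    push_neg at hcc
    nlinarith [mul_nonpos_of_nonneg_of_nonpos hpt.le hcc]
  have key : ∀ i : ℕ, i ≤ t → ∃ g : Fin t → β,
      (∀ j k : Fin t, (j:ℕ) < i → (k:ℕ) < i → j ≠ k → g j ≠ g k) ∧
      (∀ j k : Fin t, (j:ℕ) < i → (k:ℕ) < i → H.Adj (e.symm j) (e.symm k) → G.Adj (g j) (g k)) ∧
      (∀ a : α, (δ/2) ^ i * m ≤ #(cand G H e part g i a)) := by
    intro i
    induction i with
    | zero =>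
      intro _
      refine ⟨fun _ => Classical.arbitrary β, ?_, ?_, ?_⟩
      · intro j k hj; exact absurd hj (Nat.not_lt_zero _)
      · intro j k hj; exact absurd hj (Nat.not_lt_zero _)
      · intro a; rw [cand_zero, pow_zero, one_mul]; exact hm a
    | succ i ih =>
      intro hit
      obtain ⟨g, hinj, hadj, hcand⟩ := ih (Nat.le_of_succ_le hit)
      have hi : i < t := Nat.lt_of_succ_le hit
      set v : α := e.symm ⟨i, hi⟩ with hv
      have hCt : ∀ a : α, (δ/2)^t * m ≤ #(cand G H e part g i a) := fun a =>
        le_trans (mul_le_mul_of_nonneg_right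
          (pow_le_pow_of_le_one hhalf.le hhalf1 hi.le) hm0.le) (hcand a)
      set used : Finset β := (univ.filter fun j : Fin t => (j:ℕ) < i).image g with hused
      set nbrs : Finset α := univ.filter fun a => H.Adj v a with hnbrs
      set Bs : α → Finset β := fun a => (part v).filter fun y =>
        ((#((cand G H e part g i a).filter (G.Adj y)) : ℝ)
          < (δ - u') * #(cand G H e part g i a)) with hBs
      have hbad : ∀ a ∈ nbrs, (#(Bs a) : ℝ) < u' * #(part v) := by
        intro a ha
        have hav : H.Adj v a := (mem_filter.1 ha).2
        refine bad_card hu huδ hδ (hunif v a hav) (hdens v a hav) cand_subset ?_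
        calc (#(part a) : ℝ) * u' ≤ M * u' := mul_le_mul_of_nonneg_right (hM a) hu.le
          _ = u' * M := mul_comm _ _
          _ ≤ (δ/2)^t * m := hm'
          _ ≤ #(cand G H e part g i a) := hCt a
      have husedcard : (#used : ℝ) ≤ t := by
        calc (#used:ℝ) ≤ #(univ.filter fun j : Fin t => (j:ℕ) < i) :=
              Nat.cast_le.2 card_image_le
          _ ≤ #(univ : Finset (Fin t)) := Nat.cast_le.2 (card_filter_le _ _)
          _ = t := by simp
      have hbadcard : (#(nbrs.biUnion Bs) : ℝ) ≤ t * (u' * M) := by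
        calc (#(nbrs.biUnion Bs) : ℝ) ≤ ∑ a ∈ nbrs, (#(Bs a) : ℝ) := by
              exact_mod_cast card_biUnion_le
          _ ≤ ∑ _a ∈ nbrs, u' * M := by
              refine sum_le_sum fun a ha => le_trans (hbad a ha).le ?_
              exact mul_le_mul_of_nonneg_left (hM v) hu.le
          _ = #nbrs * (u' * M) := by rw [sum_const, nsmul_eq_mul]
          _ ≤ t * (u' * M) := by
              refine mul_le_mul_of_nonneg_right ?_ huM
              calc (#nbrs : ℝ) ≤ #(univ : Finset α) := Nat.cast_le.2 (card_filter_le _ _)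
                _ = t := by simp [ht]
      set S : Finset β := cand G H e part g i v \ (used ∪ nbrs.biUnion Bs) with hS
      have hScard : (1:ℝ) ≤ #S := by
        have h1 : (#(cand G H e part g i v) : ℝ) ≤ #S + #(used ∪ nbrs.biUnion Bs) := by
          exact_mod_cast Finset.card_le_card_sdiff_add_card
        have h2 : (#(used ∪ nbrs.biUnion Bs) : ℝ) ≤ #used + #(nbrs.biUnion Bs) := by
          exact_mod_cast card_union_le _ _
        have h3 := hCt v
        linarith [hbig]
      have hSne : S.Nonempty := by
        rw [← card_pos]
        have : (0:ℝ) < #S := by linarith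
        exact_mod_cast this
      obtain ⟨x, hxS⟩ := hSne
      rw [hS, mem_sdiff, mem_union] at hxS
      obtain ⟨hxC, hxnot⟩ := hxS
      push_neg at hxnot
      obtain ⟨hxused, hxbad⟩ := hxnot
      refine ⟨Function.update g ⟨i, hi⟩ x, ?_, ?_, ?_⟩
      · intro j k hj hk hjk
        rcases Nat.lt_succ_iff_lt_or_eq.1 hj with hj' | hj' <;>
          rcases Nat.lt_succ_iff_lt_or_eq.1 hk with hk' | hk'
        · have hjne : j ≠ ⟨i, hi⟩ := by rintro rfl; exact absurd hj' (lt_irrefl _)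
          have hkne : k ≠ ⟨i, hi⟩ := by rintro rfl; exact absurd hk' (lt_irrefl _)
          rw [Function.update_of_ne hjne, Function.update_of_ne hkne]
          exact hinj j k hj' hk' hjk
        · have hkk : k = ⟨i, hi⟩ := Fin.ext hk'
          have hjne : j ≠ ⟨i, hi⟩ := by rintro rfl; exact absurd hj' (lt_irrefl _)
          subst hkk
          rw [Function.update_of_ne hjne, Function.update_self]
          intro hEq
          exact hxused (mem_image.2 ⟨j, mem_filter.2 ⟨mem_univ _, hj'⟩, hEq⟩)
        · have hjj : j = ⟨i, hi⟩ := Fin.ext hj'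
          have hkne : k ≠ ⟨i, hi⟩ := by rintro rfl; exact absurd hk' (lt_irrefl _)
          subst hjj
          rw [Function.update_of_ne hkne, Function.update_self]
          intro hEq
          exact hxused (mem_image.2 ⟨k, mem_filter.2 ⟨mem_univ _, hk'⟩, hEq.symm⟩)
        · exact absurd (Fin.ext (hj'.trans hk'.symm)) hjk
      · intro j k hj hk hH
        rcases Nat.lt_succ_iff_lt_or_eq.1 hj with hj' | hj' <;>
          rcases Nat.lt_succ_iff_lt_or_eq.1 hk with hk' | hk'
        · have hjne : j ≠ ⟨i, hi⟩ := by rintro rfl; exact absurd hj' (lt_irrefl _)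
          have hkne : k ≠ ⟨i, hi⟩ := by rintro rfl; exact absurd hk' (lt_irrefl _)
          rw [Function.update_of_ne hjne, Function.update_of_ne hkne]
          exact hadj j k hj' hk' hH
        · have hkk : k = ⟨i, hi⟩ := Fin.ext hk'
          have hjne : j ≠ ⟨i, hi⟩ := by rintro rfl; exact absurd hj' (lt_irrefl _)
          subst hkk
          rw [Function.update_of_ne hjne, Function.update_self]
          have hadjv : H.Adj v (e.symm j) := by rw [hv]; exact hH.symm
          exact ((mem_cand.1 hxC).2 j hj' hadjv).symm
        · have hjj : j = ⟨i, hi⟩ := Fin.ext hj'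
          have hkne : k ≠ ⟨i, hi⟩ := by rintro rfl; exact absurd hk' (lt_irrefl _)
          subst hjj
          rw [Function.update_of_ne hkne, Function.update_self]
          have hadjv : H.Adj v (e.symm k) := by rw [hv]; exact hH
          exact (mem_cand.1 hxC).2 k hk' hadjv
        · have hjj : j = ⟨i, hi⟩ := Fin.ext hj'
          have hkk : k = ⟨i, hi⟩ := Fin.ext hk'
          subst hjj; subst hkk
          exact absurd hH (H.irrefl)
      · intro a
        rw [cand_succ g hi x a]
        by_cases hav : H.Adj a (e.symm ⟨i, hi⟩)
        · have hava : H.Adj v a := by rw [hv]; exact hav.symm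
          have hxa : x ∉ Bs a := fun hmem =>
            hxbad (mem_biUnion.2 ⟨a, mem_filter.2 ⟨mem_univ _, hava⟩, hmem⟩)
          have hxpv : x ∈ part v := cand_subset hxC
          have hgood : (δ - u') * #(cand G H e part g i a)
              ≤ #((cand G H e part g i a).filter (G.Adj x)) := by
            by_contra hcc
            push_neg at hcc
            exact hxa (mem_filter.2 ⟨hxpv, hcc⟩)
          have hsub : (cand G H e part g i a).filter (G.Adj x)
              ⊆ (cand G H e part g i a).filter
                (fun y => H.Adj a (e.symm ⟨i, hi⟩) → G.Adj y x) := by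
            intro y hy
            rw [mem_filter] at hy ⊢
            exact ⟨hy.1, fun _ => hy.2.symm⟩
          refine le_trans ?_ (Nat.cast_le.2 (card_le_card hsub))
          calc (δ/2)^(i+1) * m = (δ/2) * ((δ/2)^i * m) := by rw [pow_succ]; ring
            _ ≤ (δ - u') * #(cand G H e part g i a) :=
                mul_le_mul (by linarith) (hcand a) (by positivity) (by linarith)
            _ ≤ #((cand G H e part g i a).filter (G.Adj x)) := hgood
        · have hsub : cand G H e part g i a ⊆ (cand G H e part g i a).filter
                (fun y => H.Adj a (e.symm ⟨i, hi⟩) → G.Adj y x) := by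
            intro y hy
            rw [mem_filter]
            exact ⟨hy, fun h => absurd h hav⟩
          refine le_trans ?_ (Nat.cast_le.2 (card_le_card hsub))
          calc (δ/2)^(i+1) * m ≤ (δ/2)^i * m :=
                mul_le_mul_of_nonneg_right
                  (pow_le_pow_of_le_one hhalf.le hhalf1 (Nat.le_succ i)) hm0.le
            _ ≤ #(cand G H e part g i a) := hcand a
  obtain ⟨g, hinj, hadj, -⟩ := key t le_rfl
  refine ⟨fun a => g (e a), ?_, ?_⟩
  · intro a b hab
    by_contra hne
    exact hinj (e a) (e b) (e a).isLt (e b).isLt (fun h => hne (e.injective h)) hab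
  · intro a b h
    have := hadj (e a) (e b) (e a).isLt (e b).isLt (by simpa using h)
    exact this

end EmbedSec
section Clean
open Finpartition SimpleGraph

variable {β : Type*} [Fintype β] [DecidableEq β] {G : SimpleGraph β} [DecidableRel G.Adj]
  {A : Finset β} {u δ η : ℝ}

lemma unreduced_subset' {P : Finpartition A} :
    (A ×ˢ A).filter (fun (xy : β × β) =>
        G.Adj xy.1 xy.2 ∧ ¬(G.regularityReduced P u δ).Adj xy.1 xy.2) ⊆
      (P.nonUniforms G u).biUnion (fun (UV : Finset β × Finset β) => UV.1 ×ˢ UV.2) ∪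
        P.parts.biUnion offDiag ∪
        (P.sparsePairs G δ).biUnion fun (UV : Finset β × Finset β) =>
          G.interedges UV.1 UV.2 := by
  rintro ⟨x, y⟩
  simp only [mem_sdiff, mem_filter, mem_univ, true_and, regularityReduced_adj, not_and, not_exists,
    not_le, mem_biUnion, mem_union, exists_prop, mem_product, Prod.exists, mem_offDiag, and_imp,
    or_assoc, and_assoc, P.mk_mem_nonUniforms, Finpartition.mk_mem_sparsePairs, mem_interedges_iff]
  intros hx hy h h'
  replace h' := h' h
  obtain ⟨U, hU, hxU⟩ := P.exists_mem hx
  obtain ⟨V, hV, hyV⟩ := P.exists_mem hy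
  obtain rfl | hUV := eq_or_ne U V
  · exact Or.inr (Or.inl ⟨U, hU, hxU, hyV, G.ne_of_adj h⟩)
  by_cases h₂ : G.IsUniform u U V
  · exact Or.inr <| Or.inr ⟨U, V, hU, hV, hUV, h' _ hU _ hV hxU hyV hUV h₂, hxU, hyV, h⟩
  · exact Or.inl ⟨U, V, hU, hV, hUV, h₂, hxU, hyV⟩

lemma clean [Nonempty β] (G : SimpleGraph β) [DecidableRel G.Adj]
    (P : Finpartition (univ : Finset β))
    (hu : 0 < u) (hδ : 0 ≤ δ) (hη : 0 < η)
    (hP : P.IsEquipartition) (hPu : P.IsUniform G u) (hparts : 4 / η ≤ #P.parts) :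
    2 * ((#G.edgeFinset : ℝ) - #(G.regularityReduced P u δ).edgeFinset)
      < (4 * u + η / 2 + 4 * δ) * (Fintype.card β ^ 2 : ℕ) := by
  classical
  calc
    2 * ((#G.edgeFinset : ℝ) - #(G.regularityReduced P u δ).edgeFinset)
        = (#((univ ×ˢ univ).filter fun (xy : β × β) =>
            G.Adj xy.1 xy.2 ∧ ¬(G.regularityReduced P u δ).Adj xy.1 xy.2) : ℝ) := by
      rw [univ_product_univ, mul_sub, filter_and_not, cast_card_sdiff]
      · norm_cast
        rw [two_mul_card_edgeFinset, two_mul_card_edgeFinset]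
      · exact monotone_filter_right _ fun xy _ hxy => regularityReduced_le hxy
    _ ≤ (#((P.nonUniforms G u).biUnion (fun (UV : Finset β × Finset β) => UV.1 ×ˢ UV.2) ∪
          P.parts.biUnion offDiag ∪
          (P.sparsePairs G δ).biUnion fun (UV : Finset β × Finset β) =>
            G.interedges UV.1 UV.2) : ℝ) := by
      exact Nat.cast_le.2 (card_le_card (unreduced_subset' (G := G) (P := P) (u := u) (δ := δ)))
    _ ≤ (#((P.nonUniforms G u).biUnion (fun (UV : Finset β × Finset β) => UV.1 ×ˢ UV.2) ∪
          P.parts.biUnion offDiag) : ℝ) +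
          #((P.sparsePairs G δ).biUnion fun (UV : Finset β × Finset β) =>
            G.interedges UV.1 UV.2) := by
      exact_mod_cast card_union_le _ _
    _ ≤ (#((P.nonUniforms G u).biUnion fun (UV : Finset β × Finset β) => UV.1 ×ˢ UV.2) : ℝ) +
          #(P.parts.biUnion offDiag) +
          #((P.sparsePairs G δ).biUnion fun (UV : Finset β × Finset β) =>
            G.interedges UV.1 UV.2) := by
      gcongr
      exact_mod_cast card_union_le _ _
    _ < 4 * u * #(univ : Finset β) ^ 2 + (#(P.parts.biUnion offDiag) : ℝ) +
          #((P.sparsePairs G δ).biUnion fun (UV : Finset β × Finset β) =>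
            G.interedges UV.1 UV.2) := by
      gcongr
      exact hP.sum_nonUniforms_lt univ_nonempty hu hPu
    _ ≤ 4 * u * #(univ : Finset β) ^ 2 + η / 2 * #(univ : Finset β) ^ 2 +
          4 * δ * #(univ : Finset β) ^ 2 := by
      gcongr
      · exact hP.card_biUnion_offDiag_le hη hparts
      · exact hP.card_interedges_sparsePairs_le hδ
    _ = (4 * u + η / 2 + 4 * δ) * (Fintype.card β ^ 2 : ℕ) := by
      rw [Finset.card_univ]
      push_cast
      ring

end Clean

end RemovalAux

set_option maxHeartbeats 2000000 in
open Finset in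
/-- For every `ε > 0`, every sufficiently large `H`-free graph `G` on `n` vertices has a
spanning subgraph `G'` with `e(G) - e(G') ≤ ε * n ^ 2` to which `H` is not
homomorphic. -/
theorem statement10 {α : Type*} [Fintype α] (H : SimpleGraph α) (ε : ℝ) (hε : 0 < ε) :
    ∃ N : ℕ, ∀ n : ℕ, N ≤ n → ∀ G : SimpleGraph (Fin n), ¬ Copies H G →
      ∃ G' : SimpleGraph (Fin n), G' ≤ G ∧
        ((G.edgeSet \ G'.edgeSet).ncard : ℝ) ≤ ε * n ^ 2 ∧ IsEmpty (H →g G') := by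
  classical
  rcases isEmpty_or_nonempty α with hα | hα
  · refine ⟨0, fun n _ G hG => absurd ?_ hG⟩
    exact ⟨⟨fun a => isEmptyElim a, fun {a b} h => isEmptyElim a⟩, fun a => isEmptyElim a⟩
  set t := Fintype.card α with ht
  have ht1 : 1 ≤ t := Fintype.card_pos
  have htr : (0:ℝ) ≤ t := Nat.cast_nonneg _
  set ε' : ℝ := min ε (1/2) with hε'def
  have hε'0 : 0 < ε' := lt_min hε (by norm_num)
  have hε'ε : ε' ≤ ε := min_le_left _ _
  have hε'1 : ε' ≤ 1/2 := min_le_right _ _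
  set δ : ℝ := ε' / 16 with hδdef
  have hδ0 : 0 < δ := by positivity
  have hδ1 : δ ≤ 1 := by rw [hδdef]; linarith
  have hpt : 0 < (δ/2)^t := by positivity
  set u' : ℝ := min (ε'/16) ((δ/2)^t / (8*(t+1))) with hu'def
  have hu'0 : 0 < u' := lt_min (by positivity) (by positivity)
  have hu'a : u' ≤ ε'/16 := min_le_left _ _
  have hu'b : u' ≤ (δ/2)^t / (8*(t+1)) := min_le_right _ _
  have h8t : (0:ℝ) < 8*((t:ℝ)+1) := by positivity
  have hu'b' : u' * (8*((t:ℝ)+1)) ≤ (δ/2)^t := by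
    rw [← le_div_iff₀ h8t]; exact hu'b
  have hu'δ : u' ≤ δ/2 := by
    have h1 : (δ/2)^t ≤ (δ/2)^1 := pow_le_pow_of_le_one (by positivity) (by linarith) ht1
    rw [pow_one] at h1
    nlinarith
  set l : ℕ := max (⌈8/ε'⌉₊) 1 with hldef
  set B : ℕ := SzemerediRegularity.bound u' l with hBdef
  have hB0 : 0 < B := SzemerediRegularity.bound_pos _ _
  set m₀ : ℝ := 2*((t:ℝ)+1) / ((δ/2)^t) with hm₀def
  set N : ℕ := B * (⌈m₀⌉₊ + 2) with hNdef
  refine ⟨max N l, fun n hn G hG => ?_⟩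
  have hnN : N ≤ n := le_trans (le_max_left _ _) hn
  have hnl : l ≤ n := le_trans (le_max_right _ _) hn
  have hn1 : 1 ≤ n := le_trans (le_trans (le_max_right _ 1) hnl) le_rfl
  haveI : Nonempty (Fin n) := ⟨⟨0, hn1⟩⟩
  letI : DecidableRel G.Adj := Classical.decRel _
  obtain ⟨P, hP1, hPl, hPB, hPu⟩ := szemeredi_regularity G hu'0
    (by simpa using hnl : l ≤ Fintype.card (Fin n))
  set R := G.regularityReduced P u' δ with hRdef
  have hRG : R ≤ G := SimpleGraph.regularityReduced_le
  have hPn : 0 < #P.parts := lt_of_lt_of_le (lt_of_lt_of_le Nat.zero_lt_one (le_max_right _ 1)) hPl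
  have hcarduniv : #(univ : Finset (Fin n)) = n := by simp
  set c : ℕ := n / #P.parts with hcdef
  have hlow : ∀ U ∈ P.parts, c ≤ #U := by
    intro U hU
    have := hP1.average_le_card_part hU
    rwa [hcarduniv] at this
  have hhigh : ∀ U ∈ P.parts, #U ≤ c + 1 := by
    intro U hU
    have := hP1.card_part_le_average_add_one hU
    rwa [hcarduniv] at this
  have hcB : n / B ≤ c := Nat.div_le_div_left hPB hPn
  have hNc : ⌈m₀⌉₊ + 2 ≤ n / B := by
    rw [Nat.le_div_iff_mul_le hB0]
    calc (⌈m₀⌉₊ + 2) * B = N := by rw [hNdef, mul_comm]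
      _ ≤ n := hnN
  have hc2 : ⌈m₀⌉₊ + 2 ≤ c := le_trans hNc hcB
  have hc1 : 1 ≤ c := by omega
  have hc1r : (1:ℝ) ≤ c := by exact_mod_cast hc1
  have hcm : m₀ ≤ (c:ℝ) := by
    calc m₀ ≤ ⌈m₀⌉₊ := Nat.le_ceil _
      _ ≤ (c:ℝ) := by exact_mod_cast le_trans (Nat.le_add_right _ 2) hc2
  have hpc : 2*((t:ℝ)+1) ≤ (δ/2)^t * c := by
    have := mul_le_mul_of_nonneg_left hcm hpt.le
    rwa [hm₀def, mul_div_cancel₀ _ hpt.ne'] at this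
  -- edge count
  have hparts4 : 4 / (ε'/2) ≤ (#P.parts : ℝ) := by
    have h8 : (8/ε' : ℝ) ≤ (l : ℝ) :=
      le_trans (Nat.le_ceil _) (Nat.cast_le.2 (le_max_left _ _))
    calc 4/(ε'/2) = 8/ε' := by
          rw [div_div_eq_mul_div]; norm_num
      _ ≤ (l : ℝ) := h8
      _ ≤ (#P.parts : ℝ) := Nat.cast_le.2 hPl
  have hclean := RemovalAux.clean (η := ε'/2) G P hu'0 hδ0.le (by positivity) hP1 hPu hparts4
  have hcard2 : ((Fintype.card (Fin n)) ^ 2 : ℕ) = n ^ 2 := by simp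
  rw [hcard2] at hclean
  push_cast at hclean
  have hn2 : (0:ℝ) ≤ (n:ℝ)^2 := by positivity
  have hsubE : R.edgeFinset ⊆ G.edgeFinset := SimpleGraph.edgeFinset_subset_edgeFinset.2 hRG
  have hdiff : ((G.edgeSet \ R.edgeSet).ncard : ℝ) = (#G.edgeFinset : ℝ) - #R.edgeFinset := by
    have h1 : G.edgeSet \ R.edgeSet = ↑(G.edgeFinset \ R.edgeFinset) := by
      rw [Finset.coe_sdiff, SimpleGraph.coe_edgeFinset, SimpleGraph.coe_edgeFinset]
    rw [h1, Set.ncard_coe_finset, Finset.cast_card_sdiff hsubE]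
  refine ⟨R, hRG, ?_, ?_⟩
  · rw [hdiff]
    have hcoef : 4*u' + (ε'/2)/2 + 4*δ ≤ ε' := by rw [hδdef]; linarith
    have h2 : (4*u' + (ε'/2)/2 + 4*δ) * (n:ℝ)^2 ≤ ε' * (n:ℝ)^2 :=
      mul_le_mul_of_nonneg_right hcoef hn2
    have h3 : ε' * (n:ℝ)^2 ≤ ε * (n:ℝ)^2 := mul_le_mul_of_nonneg_right hε'ε hn2
    nlinarith
  · refine ⟨fun f => hG ?_⟩
    set part : α → Finset (Fin n) := fun a => P.part (f a) with hpartdef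
    have hpmem : ∀ a, part a ∈ P.parts := fun a => P.part_mem.2 (mem_univ _)
    have hadjfact : ∀ a b, H.Adj a b → G.IsUniform u' (part a) (part b) ∧
        δ ≤ (G.edgeDensity (part a) (part b) : ℝ) := by
      intro a b hab
      obtain ⟨-, U, hU, V, hV, haU, hbV, -, hunifUV, hdensUV⟩ := f.map_adj hab
      have hUeq : part a = U := P.part_eq_of_mem hU haU
      have hVeq : part b = V := P.part_eq_of_mem hV hbV
      rw [hUeq, hVeq]
      exact ⟨hunifUV, hdensUV⟩
    have hq8 : u' * ((t:ℝ)) ≤ (δ/2)^t / 8 := by nlinarith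
    have htr1 : (1:ℝ) ≤ t := by exact_mod_cast ht1
    have hq16 : u' ≤ (δ/2)^t / 16 := by
      have h16 : u' * 16 ≤ u' * (8*((t:ℝ)+1)) :=
        mul_le_mul_of_nonneg_left (by linarith) hu'0.le
      linarith
    have hcc : (c:ℝ) + 1 ≤ 2*c := by linarith
    have hbig : (t:ℝ) * (u' * ((c:ℝ)+1)) + t + 1 ≤ (δ/2)^t * c := by
      have h1 : (t:ℝ) * (u' * ((c:ℝ)+1)) ≤ (u' * t) * (2*c) := by
        have hx := mul_le_mul_of_nonneg_left hcc (mul_nonneg hu'0.le htr)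
        calc (t:ℝ) * (u' * ((c:ℝ)+1)) = (u'*(t:ℝ)) * ((c:ℝ)+1) := by ring
          _ ≤ (u'*(t:ℝ)) * (2*(c:ℝ)) := hx
      have h2 : (u' * (t:ℝ)) * (2*c) ≤ ((δ/2)^t / 8) * (2*c) :=
        mul_le_mul_of_nonneg_right hq8 (by linarith)
      have h3 : ((t:ℝ)) + 1 ≤ (δ/2)^t * c / 2 := by linarith
      nlinarith
    have hm' : u' * ((c:ℝ)+1) ≤ (δ/2)^t * c := by
      have h1 : u' * ((c:ℝ)+1) ≤ ((δ/2)^t/16) * (2*c) := by nlinarith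
      nlinarith
    obtain ⟨g, hginj, hghom⟩ := RemovalAux.embed H G part δ u' (c:ℝ) ((c:ℝ)+1)
      hδ0 hδ1 hu'0 hu'δ
      (fun a => by exact_mod_cast hlow _ (hpmem a))
      (fun a => by exact_mod_cast hhigh _ (hpmem a))
      (fun a b hab => (hadjfact a b hab).1)
      (fun a b hab => (hadjfact a b hab).2)
      hbig hm'
    exact ⟨⟨g, fun {a b} hab => hghom a b hab⟩, hginj⟩
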